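/- Fix a ∈ ℝ and b, c ∈ ℂ. For k ∈ ℝ define the 4×4 Hermitian matrix Ĥ(k) = [[a, c̄ − e^{ik}, 0, b̄], [c − e^{−ik}, −a, b̄, 0], [0, b, a, −c + e^{−ik}], [b, 0, −c̄ + e^{ik}, −a]]. Then there exists k ∈ ℝ for which Ĥ(k) is not invertible (equivalently, det Ĥ(k) = 0) if and only if a = 0, b = 0 and |c| = 1. -/

import Mathlib

noncomputable section

open scoped ComplexConjugate

/-- The symbol `Ĥ(k)` of the local-model Hamiltonian, a `4×4` Hermitian matrix depending on the
parameters `a ∈ ℝ`, `b, c ∈ ℂ` and on `k ∈ ℝ` (with `e^{ik} = cos k + i sin k`). -/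
def HhatMat (a : ℝ) (b c : ℂ) (k : ℝ) : Matrix (Fin 4) (Fin 4) ℂ :=
  !![(a : ℂ), conj c - Complex.exp (Complex.I * k), 0, conj b;
     c - Complex.exp (-(Complex.I * k)), -(a : ℂ), conj b, 0;
     0, b, (a : ℂ), -c + Complex.exp (-(Complex.I * k));
     b, 0, -(conj c) + Complex.exp (Complex.I * k), -(a : ℂ)]

set_option maxHeartbeats 1600000 in
lemma det_aux (a b B c C E : ℂ) (hE : E ≠ 0) :
    (!![a, C - E, 0, B;
        c - E⁻¹, -a, B, 0;
        0, b, a, -c + E⁻¹;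
        b, 0, -C + E, -a]).det
      = (a ^ 2 + b * B + (c - E⁻¹) * (C - E)) ^ 2 := by
  simp [Matrix.det_succ_row_zero, Fin.sum_univ_succ, Fin.succAbove]
  rw [← sub_eq_zero]
  ring_nf

lemma hhat_det_eq (a : ℝ) (b c : ℂ) (k : ℝ) :
    (HhatMat a b c k).det
      = ((a : ℂ) ^ 2 + b * conj b
          + (c - Complex.exp (-(Complex.I * k))) * (conj c - Complex.exp (Complex.I * k))) ^ 2 := by
  have hE : Complex.exp (Complex.I * k) ≠ 0 := Complex.exp_ne_zero _
  have hinv : Complex.exp (-(Complex.I * k)) = (Complex.exp (Complex.I * k))⁻¹ :=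
    Complex.exp_neg _
  rw [HhatMat, hinv]
  exact det_aux _ _ _ _ _ _ hE

theorem stmt17 (a : ℝ) (b c : ℂ) :
    (∃ k : ℝ, (HhatMat a b c k).det = 0) ↔ (a = 0 ∧ b = 0 ∧ ‖c‖ = 1) := by
  have key : ∀ k : ℝ, (HhatMat a b c k).det
      = ((a ^ 2 + ‖b‖ ^ 2 + ‖c - Complex.exp (-(Complex.I * k))‖ ^ 2 : ℝ) : ℂ) ^ 2 := by
    intro k
    have hconj : conj (Complex.exp (-(Complex.I * k))) = Complex.exp (Complex.I * k) := by
      rw [← Complex.exp_conj]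
      congr 1
      simp [map_neg, map_mul, Complex.conj_I, Complex.conj_ofReal]
    rw [hhat_det_eq]
    have hb : b * conj b = ((‖b‖ ^ 2 : ℝ) : ℂ) := by
      rw [Complex.mul_conj']
      push_cast
      ring
    have hc : (c - Complex.exp (-(Complex.I * k))) * (conj c - Complex.exp (Complex.I * k))
        = ((‖c - Complex.exp (-(Complex.I * k))‖ ^ 2 : ℝ) : ℂ) := by
      have : conj c - Complex.exp (Complex.I * k)
          = conj (c - Complex.exp (-(Complex.I * k))) := by
        rw [map_sub, hconj]
      rw [this, Complex.mul_conj']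
      push_cast
      ring
    rw [hb, hc]
    push_cast
    ring
  constructor
  · rintro ⟨k, hk⟩
    rw [key k] at hk
    have h0 : (a ^ 2 + ‖b‖ ^ 2 + ‖c - Complex.exp (-(Complex.I * k))‖ ^ 2 : ℝ) = 0 := by
      have := pow_eq_zero_iff (n := 2) (by norm_num) |>.mp hk
      exact_mod_cast this
    have ha2 : a ^ 2 = 0 ∧ ‖b‖ ^ 2 = 0 ∧ ‖c - Complex.exp (-(Complex.I * k))‖ ^ 2 = 0 := by
      constructor
      · nlinarith [sq_nonneg a, sq_nonneg ‖b‖, sq_nonneg ‖c - Complex.exp (-(Complex.I * k))‖]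
      constructor
      · nlinarith [sq_nonneg a, sq_nonneg ‖b‖, sq_nonneg ‖c - Complex.exp (-(Complex.I * k))‖]
      · nlinarith [sq_nonneg a, sq_nonneg ‖b‖, sq_nonneg ‖c - Complex.exp (-(Complex.I * k))‖]
    obtain ⟨h1, h2, h3⟩ := ha2
    have ha : a = 0 := by nlinarith
    have hb : b = 0 := by
      have : ‖b‖ = 0 := by nlinarith [norm_nonneg b]
      simpa using this
    have hc : c = Complex.exp (-(Complex.I * k)) := by
      have : ‖c - Complex.exp (-(Complex.I * k))‖ = 0 := by
        nlinarith [norm_nonneg (c - Complex.exp (-(Complex.I * k)))]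
      have := norm_eq_zero.mp this
      linear_combination this
    refine ⟨ha, hb, ?_⟩
    rw [hc]
    have : (-(Complex.I * k)).re = 0 := by simp
    rw [Complex.norm_exp, this, Real.exp_zero]
  · rintro ⟨ha, hb, hc⟩
    refine ⟨-c.arg, ?_⟩
    have hcval : Complex.exp (-(Complex.I * ((-c.arg : ℝ) : ℂ))) = c := by
      have h1 := Complex.norm_mul_exp_arg_mul_I c
      rw [show ‖c‖ = 1 by exact hc] at h1
      rw [show (-(Complex.I * ((-c.arg : ℝ) : ℂ))) = (c.arg : ℂ) * Complex.I by push_cast; ring]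
      simpa using h1
    rw [key, ha, hb, hcval]
    simp
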